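/- Let G^c be a vertex-coloured graph with c colours, n vertices, and m edges, and let k be a positive integer. If m ≥ C(n − k + c − 1, 2) + (n − k) and n > k + c − 2, then γᵗ(G^c) ≤ k. (Here C(a,2) = a(a−1)/2 denotes a binomial coefficient.) -/

import Mathlib

/-- `S` is a dominating set of `G`: every vertex is in `S` or has a neighbour in `S`. -/
def IsDomSet {V : Type*} (G : SimpleGraph V) (S : Finset V) : Prop :=
  ∀ v : V, v ∈ S ∨ ∃ u ∈ S, G.Adj u v

/-- `S` is tropical w.r.t. the colouring `col`: every colour appears on a vertex of `S`. -/
def IsTropical {V C : Type*} (col : V → C) (S : Finset V) : Prop :=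
  ∀ ch : C, ∃ v ∈ S, col v = ch

/-- The tropical domination number: the least size of a tropical dominating set. -/
noncomputable def tropDomNum {V C : Type*} (G : SimpleGraph V) (col : V → C) : ℕ :=
  sInf {k : ℕ | ∃ S : Finset V, IsDomSet G S ∧ IsTropical col S ∧ S.card = k}

namespace TDaux


open Finset

variable {V : Type*} [Fintype V] [DecidableEq V] (G : SimpleGraph V) [DecidableRel G.Adj]

def NFin (x : V) : Finset V := insert x (G.neighborFinset x)

def cov (U : Finset V) (x : V) : ℕ := (U ∩ NFin G x).card

lemma cov_mono {U U' : Finset V} (h : U' ⊆ U) (x : V) : cov G U' x ≤ cov G U x :=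
  Finset.card_le_card (Finset.inter_subset_inter h (Finset.Subset.refl _))

lemma cov_le_card (U : Finset V) (x : V) : cov G U x ≤ U.card :=
  Finset.card_le_card Finset.inter_subset_left

lemma one_le_cov {U : Finset V} {x : V} (hx : x ∈ U) : 1 ≤ cov G U x :=
  Finset.card_pos.2 ⟨x, Finset.mem_inter.2 ⟨hx, Finset.mem_insert_self _ _⟩⟩

lemma card_inter_nbr_add_one {U : Finset V} {x : V} (hx : x ∈ U) :
    (U ∩ G.neighborFinset x).card + 1 = cov G U x := by
  have hxn : x ∉ U ∩ G.neighborFinset x := by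
    intro hmem
    exact G.irrefl ((SimpleGraph.mem_neighborFinset G x x).1 (Finset.mem_inter.1 hmem).2)
  have h : U ∩ NFin G x = insert x (U ∩ G.neighborFinset x) := by
    rw [NFin, Finset.inter_insert_of_mem hx]
  rw [cov, h, Finset.card_insert_of_notMem hxn]

noncomputable def pick [Nonempty V] (U : Finset V) : V :=
  (Finset.exists_max_image Finset.univ (cov G U) Finset.univ_nonempty).choose

lemma pick_max [Nonempty V] (U : Finset V) (x : V) : cov G U x ≤ cov G U (pick G U) := by
  have h := (Finset.exists_max_image Finset.univ (cov G U) Finset.univ_nonempty).choose_spec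
  exact h.2 x (Finset.mem_univ x)

noncomputable def gstep [Nonempty V] (U : Finset V) : Finset V := U \ NFin G (pick G U)

lemma gstep_subset [Nonempty V] (U : Finset V) : gstep G U ⊆ U := Finset.sdiff_subset

lemma card_gstep [Nonempty V] (U : Finset V) :
    (gstep G U).card + cov G U (pick G U) = U.card :=
  Finset.card_sdiff_add_card_inter U (NFin G (pick G U))

lemma gstep_inter_nbr_pick [Nonempty V] (U : Finset V) :
    gstep G U ∩ G.neighborFinset (pick G U) = ∅ := by
  ext y
  simp only [Finset.mem_inter, Finset.notMem_empty, iff_false, not_and, gstep,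
    Finset.mem_sdiff, NFin, Finset.mem_insert]
  intro hy hy3
  exact absurd (Or.inr hy3) hy.2

def DD (U : Finset V) : ℕ := ∑ x ∈ U, (U ∩ G.neighborFinset x).card

lemma sum_inter_nbr_comm (A B : Finset V) :
    ∑ x ∈ A, (B ∩ G.neighborFinset x).card = ∑ y ∈ B, (A ∩ G.neighborFinset y).card := by
  have key : ∀ (A B : Finset V), ∑ x ∈ A, (B ∩ G.neighborFinset x).card
      = ∑ x ∈ A, ∑ y ∈ B, (if G.Adj x y then 1 else 0) := by
    intro A B
    refine Finset.sum_congr rfl fun x _ => ?_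
    have h : B ∩ G.neighborFinset x = B.filter (fun y => G.Adj x y) := by
      ext y
      simp [SimpleGraph.mem_neighborFinset]
    rw [h, Finset.card_filter]
  rw [key, key, Finset.sum_comm]
  refine Finset.sum_congr rfl fun y _ => Finset.sum_congr rfl fun x _ => ?_
  simp only [G.adj_comm]

lemma DD_univ : DD G Finset.univ = 2 * G.edgeFinset.card := by
  rw [← SimpleGraph.sum_degrees_eq_twice_card_edges]
  refine Finset.sum_congr rfl fun x _ => ?_
  rw [Finset.univ_inter]
  rfl

lemma DD_split [Nonempty V] (U : Finset V) :
    DD G U = (∑ x ∈ U ∩ NFin G (pick G U), (U ∩ G.neighborFinset x).card)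
      + ((∑ x ∈ U ∩ NFin G (pick G U), ((gstep G U) ∩ G.neighborFinset x).card)
      + DD G (gstep G U)) := by
  set v := pick G U with hv
  set C := U ∩ NFin G v with hC
  set U' := gstep G U with hU'
  have hdisj : Disjoint U' C := by
    refine Disjoint.mono_right ?_ (Finset.sdiff_disjoint (t := U) (s := NFin G v))
    rw [hC]; exact Finset.inter_subset_right
  have hunion : U' ∪ C = U := Finset.sdiff_union_inter U (NFin G v)
  have h0 : DD G U = ∑ x ∈ U' ∪ C, (U ∩ G.neighborFinset x).card := by
    rw [hunion]; rfl
  have h1 : DD G U = (∑ x ∈ U', (U ∩ G.neighborFinset x).card)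
      + ∑ x ∈ C, (U ∩ G.neighborFinset x).card := by
    rw [h0]; exact Finset.sum_union hdisj
  have h2 : ∀ x ∈ U', (U ∩ G.neighborFinset x).card
      = (U' ∩ G.neighborFinset x).card + (C ∩ G.neighborFinset x).card := by
    intro x _
    have he : U ∩ G.neighborFinset x
        = (U' ∩ G.neighborFinset x) ∪ (C ∩ G.neighborFinset x) := by
      rw [← hunion, Finset.union_inter_distrib_right]
    rw [he]
    exact Finset.card_union_of_disjoint
      (hdisj.mono Finset.inter_subset_left Finset.inter_subset_left)
  have h3 : ∑ x ∈ U', (U ∩ G.neighborFinset x).card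
      = DD G U' + ∑ x ∈ U', (C ∩ G.neighborFinset x).card := by
    rw [DD, ← Finset.sum_add_distrib]
    exact Finset.sum_congr rfl h2
  rw [h1, h3, sum_inter_nbr_comm]
  ring

noncomputable def pen [Nonempty V] (U : Finset V) : ℕ :=
  min (cov G (gstep G U) (pick G (gstep G U))) (cov G U (pick G U) - 1)

lemma s2_term_le [Nonempty V] (U : Finset V) {y : V} (hy : y ∈ U) :
    ((gstep G U) ∩ G.neighborFinset y).card ≤ pen G U := by
  apply le_min
  · calc ((gstep G U) ∩ G.neighborFinset y).card ≤ cov G (gstep G U) y :=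
        Finset.card_le_card (Finset.inter_subset_inter (Finset.Subset.refl _)
          (Finset.subset_insert _ _))
      _ ≤ _ := pick_max G _ y
  · have h1 : ((gstep G U) ∩ G.neighborFinset y).card ≤ (U ∩ G.neighborFinset y).card :=
      Finset.card_le_card (Finset.inter_subset_inter (gstep_subset G U) (Finset.Subset.refl _))
    have h2 := card_inter_nbr_add_one G hy
    have h3 := pick_max G U y
    omega

lemma two_mul_choose_two (d : ℕ) : 2 * d.choose 2 + d = d * d := by
  cases d with
  | zero => rfl
  | succ e =>
    rw [Nat.choose_two_right]
    have h2 : 2 ∣ (e + 1) * ((e + 1) - 1) := by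
      rw [Nat.succ_sub_one, mul_comm]
      exact (Nat.even_mul_succ_self e).two_dvd
    rw [Nat.mul_div_cancel' h2, Nat.succ_sub_one]
    ring


lemma key_ineq {b g1 : ℕ} (hb : 1 ≤ b) (hg : 1 ≤ g1) : b + g1 ≤ b * g1 + 1 := by
  obtain ⟨x, rfl⟩ := Nat.exists_eq_add_of_le hb
  obtain ⟨y, rfl⟩ := Nat.exists_eq_add_of_le hg
  have h : (1 + x) * (1 + y) = 1 + x + y + x * y := by ring
  omega

lemma key_ineq2 {b g1 g' : ℕ} (hg : 1 ≤ g1) (hbg : g1 ≤ b) (hg' : g' ≤ b)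
    (hg'2 : g' ≤ g1 + 1) : g1 * g1 + g1 + g' ≤ 2 * b * g1 + 1 := by
  obtain ⟨e, rfl⟩ := Nat.exists_eq_add_of_le hg
  obtain ⟨f, rfl⟩ := Nat.exists_eq_add_of_le hbg
  nlinarith [Nat.zero_le (e*e), Nat.zero_le (f*e), Nat.zero_le f]


lemma sum_cov_bound [Nonempty V] (U : Finset V) (T : Finset V) (hT : T ⊆ U) :
    (∑ x ∈ T, (U ∩ G.neighborFinset x).card) + T.card ≤ T.card * cov G U (pick G U) := by
  have hterm : ∀ x ∈ T, (U ∩ G.neighborFinset x).card + 1 ≤ cov G U (pick G U) := by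
    intro x hx
    rw [card_inter_nbr_add_one G (hT hx)]
    exact pick_max G U x
  calc (∑ x ∈ T, (U ∩ G.neighborFinset x).card) + T.card
      = ∑ x ∈ T, ((U ∩ G.neighborFinset x).card + 1) := by
        rw [Finset.sum_add_distrib, Finset.sum_const, smul_eq_mul, mul_one]
    _ ≤ ∑ _x ∈ T, cov G U (pick G U) := Finset.sum_le_sum hterm
    _ = T.card * cov G U (pick G U) := by rw [Finset.sum_const, smul_eq_mul]

lemma sum_pen_bound [Nonempty V] (U : Finset V) (T : Finset V) (hT : T ⊆ U) :
    (∑ x ∈ T, ((gstep G U) ∩ G.neighborFinset x).card) ≤ T.card * pen G U := by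
  calc (∑ x ∈ T, ((gstep G U) ∩ G.neighborFinset x).card)
      ≤ ∑ _x ∈ T, pen G U := Finset.sum_le_sum (fun x hx => s2_term_le G U (hT hx))
    _ = T.card * pen G U := by rw [Finset.sum_const, smul_eq_mul]

lemma main_bound [Nonempty V] :
    ∀ (r : ℕ) (U : Finset V),
      (∀ j, j ≤ r → r + 1 ≤ ((gstep G)^[j] U).card + j) →
      DD G U + 2 ≤ (U.card - r)^2 + 1 + pen G U := by
  intro r
  induction r with
  | zero =>
    intro U hH
    have hU1 : 1 ≤ U.card := by
      have := hH 0 (le_refl 0); simpa using this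
    obtain ⟨x, hx⟩ := Finset.card_pos.1 hU1
    have hg1 : 1 ≤ cov G U (pick G U) := le_trans (one_le_cov G hx) (pick_max G U x)
    have hgU : cov G U (pick G U) ≤ U.card := cov_le_card G U (pick G U)
    have hDD : DD G U + U.card ≤ U.card * cov G U (pick G U) := by
      have := sum_cov_bound G U U (Finset.Subset.refl U)
      exact this
    have hmul : U.card * cov G U (pick G U) ≤ U.card * U.card :=
      Nat.mul_le_mul_left _ hgU
    have hsq : (U.card - 0)^2 = U.card * U.card := by rw [Nat.sub_zero, sq]
    rw [hsq]
    have : DD G U + 2 ≤ U.card * U.card + 1 := by linarith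
    linarith [Nat.zero_le (pen G U)]
  | succ r' ih =>
    intro U hH
    -- basic facts
    have hU0 : r' + 2 ≤ U.card := by
      have := hH 0 (Nat.zero_le _); simp at this; omega
    have hU1 : r' + 1 ≤ (gstep G U).card := by
      have := hH 1 (by omega); simpa using this
    obtain ⟨x0, hx0⟩ := Finset.card_pos.1 (show 0 < U.card by omega)
    have hg1 : 1 ≤ cov G U (pick G U) := le_trans (one_le_cov G hx0) (pick_max G U x0)
    set g := cov G U (pick G U) with hgdef
    set U' := gstep G U with hU'def
    set g' := cov G U' (pick G U') with hg'def
    set p' := pen G U' with hp'def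
    have hcard : U'.card + g = U.card := card_gstep G U
    -- hypotheses for U'
    have hH' : ∀ j, j ≤ r' → r' + 1 ≤ ((gstep G)^[j] U').card + j := by
      intro j hj
      have := hH (j+1) (by omega)
      rw [Function.iterate_succ_apply, ← hU'def] at this
      omega
    have hIH := ih U' hH'
    rw [← hp'def] at hIH
    -- beta
    obtain ⟨β, hβeq⟩ : ∃ b, U'.card = r' + b := ⟨U'.card - r', by omega⟩
    have hβ1 : 1 ≤ β := by omega
    obtain ⟨g1, hg1eq⟩ : ∃ t, g = t + 1 := ⟨g - 1, by omega⟩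
    -- g' ≤ β
    have hstep' : (gstep G U').card + g' = U'.card := card_gstep G U'
    have hg'β : g' ≤ β := by
      rcases Nat.eq_zero_or_pos r' with h0 | h0
      · have := cov_le_card G U' (pick G U')
        omega
      · have := hH' 1 h0
        rw [Function.iterate_one] at this
        omega
    have hg'g : g' ≤ g := le_trans (cov_mono G (gstep_subset G U) (pick G U')) (pick_max G U _)
    have hp'le : p' ≤ g' - 1 := Nat.min_le_right _ _
    have hpeq : pen G U = min g' g1 := by
      rw [pen, ← hg'def, ← hgdef, hg1eq]
      simp
    -- split and bounds
    have hsplit := DD_split G U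
    set C := U ∩ NFin G (pick G U) with hCdef
    have hCcard : C.card = g := rfl
    set S1 := ∑ x ∈ C, (U ∩ G.neighborFinset x).card with hS1def
    set S2 := ∑ x ∈ C, (U' ∩ G.neighborFinset x).card with hS2def
    have hS1 : S1 + g ≤ g * g := by
      have := sum_cov_bound G U C Finset.inter_subset_left
      rw [hCcard] at this
      exact this
    have hS2 : S2 ≤ g * pen G U := by
      have := sum_pen_bound G U C Finset.inter_subset_left
      rw [hCcard] at this
      exact this
    -- target card rewriting
    have hur : U.card - (r' + 1) = β + g1 := by omega
    rw [hsplit, hur]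
    rw [show (U'.card - r') = β from by omega] at hIH
    rw [hpeq]
    -- case analysis
    have hsqβ : (β + g1)^2 = β*β + 2*β*g1 + g1*g1 := by ring
    have hβsq : β ^ 2 = β * β := sq β
    rw [hβsq] at hIH
    have hS1' : S1 ≤ g1 * g1 + g1 := by
      rw [hg1eq] at hS1
      have hex : (g1+1) * (g1+1) = g1*g1 + 2*g1 + 1 := by ring
      linarith
    have hdub : 2*β*g1 = β*g1 + β*g1 := by ring
    rcases Nat.eq_zero_or_pos g' with hg'0 | hg'pos
    · -- g' = 0
      have hp0 : min g' g1 = 0 := by rw [hg'0]; simp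
      have hp'0 : p' = 0 := by omega
      rw [hp0]
      have hS2' : S2 ≤ 0 := by rw [hpeq, hp0] at hS2; simpa using hS2
      have hmono : g1 ≤ β * g1 := Nat.le_mul_of_pos_left g1 hβ1
      rw [hsqβ]
      rw [hp'0] at hIH
      linarith
    · have hp'1 : p' + 1 ≤ g' := by omega
      rcases le_total g' g1 with hle | hle
      · -- pen = g'
        rw [min_eq_left hle]
        have hg1pos : 1 ≤ g1 := le_trans hg'pos hle
        have hkey := key_ineq hβ1 hg1pos    -- β + g1 ≤ β*g1 + 1
        have hS2b : S2 ≤ β*g1 + β := by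
          have h1 : S2 ≤ g * g' := by
            rw [hpeq, min_eq_left hle] at hS2; exact hS2
          have h2 : g * g' ≤ g * β := Nat.mul_le_mul_left _ hg'β
          have h3 : g * β = β*g1 + β := by rw [hg1eq]; ring
          linarith
        rw [hsqβ]
        linarith
      · -- pen = g1
        rw [min_eq_right hle]
        have hg1β : g1 ≤ β := le_trans hle hg'β
        have hS2c : S2 ≤ g1*g1 + g1 := by
          have h1 : S2 ≤ g * g1 := by
            rw [hpeq, min_eq_right hle] at hS2; exact hS2
          have h3 : g * g1 = g1*g1 + g1 := by rw [hg1eq]; ring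
          linarith
        rcases Nat.eq_zero_or_pos g1 with h10 | h1pos
        · -- g1 = 0
          have hg'1 : g' = 1 := by
            have hgg : g' ≤ g := hg'g
            omega
          have hp'0 : p' = 0 := by omega
          rw [hp'0] at hIH
          rw [hsqβ, h10]
          rw [h10] at hS1' hS2c
          simp only [Nat.mul_zero, Nat.zero_mul, Nat.add_zero, Nat.zero_add] at hS1' hS2c ⊢
          linarith
        · -- g1 ≥ 1
          have hg'le : g' ≤ g1 + 1 := by omega
          have hfin := key_ineq2 h1pos hg1β hg'β hg'le
          rw [hsqβ]
          linarith

lemma failing_bound [Nonempty V] (κ : ℕ) (hκ : 1 ≤ κ)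
    (H : ∀ j, j ≤ κ → κ + 1 ≤ ((gstep G)^[j] (Finset.univ : Finset V)).card + j) :
    2 * G.edgeFinset.card + 2 ≤ (Fintype.card V - κ)^2 + 1 := by
  obtain ⟨r', rfl⟩ : ∃ t, κ = t + 1 := ⟨κ - 1, by omega⟩
  set U : Finset V := Finset.univ with hUdef
  have hU0 : r' + 2 ≤ U.card := by
    have := H 0 (Nat.zero_le _); simp at this; omega
  have hU1 : r' + 1 ≤ (gstep G U).card := by
    have := H 1 (by omega); simpa using this
  have hg1 : 1 ≤ cov G U (pick G U) :=
    le_trans (one_le_cov G (Finset.mem_univ (pick G U))) (pick_max G U _)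
  set g := cov G U (pick G U) with hgdef
  set U' := gstep G U with hU'def
  set g' := cov G U' (pick G U') with hg'def
  set p' := pen G U' with hp'def
  have hcard : U'.card + g = U.card := card_gstep G U
  have hH' : ∀ j, j ≤ r' → r' + 1 ≤ ((gstep G)^[j] U').card + j := by
    intro j hj
    have := H (j+1) (by omega)
    rw [Function.iterate_succ_apply, ← hU'def] at this
    omega
  have hIH := main_bound G r' U' hH'
  rw [← hp'def] at hIH
  obtain ⟨β, hβeq⟩ : ∃ b, U'.card = r' + b := ⟨U'.card - r', by omega⟩
  have hβ1 : 1 ≤ β := by omega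
  obtain ⟨g1, hg1eq⟩ : ∃ t, g = t + 1 := ⟨g - 1, by omega⟩
  have hstep' : (gstep G U').card + g' = U'.card := card_gstep G U'
  have hg'β : g' ≤ β := by
    rcases Nat.eq_zero_or_pos r' with h0 | h0
    · have := cov_le_card G U' (pick G U')
      omega
    · have := hH' 1 h0
      rw [Function.iterate_one] at this
      omega
  have hg'g : g' ≤ g := le_trans (cov_mono G (gstep_subset G U) (pick G U')) (pick_max G U _)
  have hp'le : p' ≤ g' - 1 := Nat.min_le_right _ _
  -- split
  have hsplit := DD_split G U
  set C := U ∩ NFin G (pick G U) with hCdef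
  have hCcard : C.card = g := rfl
  have hvC : pick G U ∈ C := by
    rw [hCdef]
    exact Finset.mem_inter.2 ⟨Finset.mem_univ _, Finset.mem_insert_self _ _⟩
  set S1 := ∑ x ∈ C, (U ∩ G.neighborFinset x).card with hS1def
  set S2 := ∑ x ∈ C, (U' ∩ G.neighborFinset x).card with hS2def
  have hS1 : S1 + g ≤ g * g := by
    have := sum_cov_bound G U C Finset.inter_subset_left
    rw [hCcard] at this
    exact this
  -- S2 with erased pick
  have hS2split : (U' ∩ G.neighborFinset (pick G U)).card
      + ∑ x ∈ C.erase (pick G U), (U' ∩ G.neighborFinset x).card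
      = ∑ x ∈ C, (U' ∩ G.neighborFinset x).card :=
    Finset.add_sum_erase C (fun x => (U' ∩ G.neighborFinset x).card) hvC
  rw [← hS2def] at hS2split
  have hzero : (U' ∩ G.neighborFinset (pick G U)).card = 0 := by
    rw [hU'def, gstep_inter_nbr_pick G U]
    exact Finset.card_empty
  have hecard : (C.erase (pick G U)).card = g1 := by
    rw [Finset.card_erase_of_mem hvC, hCcard, hg1eq]
    omega
  have hS2 : S2 ≤ g1 * pen G U := by
    have hb := sum_pen_bound G U (C.erase (pick G U))
      (le_trans (Finset.erase_subset _ _) Finset.inter_subset_left)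
    rw [hecard] at hb
    rw [← hS2split, hzero, Nat.zero_add]
    exact hb
  -- target
  have hn : Fintype.card V = U.card := (Finset.card_univ).symm
  have hur : Fintype.card V - (r' + 1) = β + g1 := by omega
  have hDDuniv : 2 * G.edgeFinset.card = DD G U := (DD_univ G).symm
  rw [hDDuniv, hsplit, hur]
  have hsqβ : (β + g1)^2 = β*β + 2*β*g1 + g1*g1 := by ring
  rw [show (U'.card - r') = β from by omega] at hIH
  have hβsq : β ^ 2 = β * β := sq β
  rw [hβsq] at hIH
  have hpeq : pen G U = min g' g1 := by
    rw [pen, ← hg'def, ← hgdef, hg1eq]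
    simp
  have hS1' : S1 ≤ g1 * g1 + g1 := by
    rw [hg1eq] at hS1
    have hex : (g1+1) * (g1+1) = g1*g1 + 2*g1 + 1 := by ring
    linarith
  have hdub : 2*β*g1 = β*g1 + β*g1 := by ring
  rw [hsqβ]
  rcases Nat.eq_zero_or_pos g' with hg'0 | hg'pos
  · -- g' = 0
    have hp0 : min g' g1 = 0 := by rw [hg'0]; simp
    have hp'0 : p' = 0 := by omega
    have hS2' : S2 ≤ 0 := by rw [hpeq, hp0] at hS2; simpa using hS2
    have hmono : g1 ≤ β * g1 := Nat.le_mul_of_pos_left g1 hβ1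
    rw [hp'0] at hIH
    linarith
  · have hp'1 : p' + 1 ≤ g' := by omega
    rcases le_total g' g1 with hle | hle
    · -- pen = g'
      have hg1pos : 1 ≤ g1 := le_trans hg'pos hle
      have hS2b : S2 ≤ g1 * β := by
        have h1 : S2 ≤ g1 * g' := by
          rw [hpeq, min_eq_left hle] at hS2; exact hS2
        exact le_trans h1 (Nat.mul_le_mul_left _ hg'β)
      -- need: g1*g' stuff; final: S1 + S2 + DD' + 2 ≤ β*β + 2βg1 + g1g1 + 1
      -- via: g1 + g1*β + β + p' ≤ 2βg1 + 1? cert: (β−1)(g1−1) ≥ 0 : β+g1 ≤ βg1+1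
      have hkey := key_ineq hβ1 hg1pos
      have hgb : g1 * β = β * g1 := by ring
      linarith
    · -- pen = g1
      have hg1β : g1 ≤ β := le_trans hle hg'β
      have hS2c : S2 ≤ g1*g1 := by
        have h1 : S2 ≤ g1 * g1 := by
          rw [hpeq, min_eq_right hle] at hS2; exact hS2
        exact h1
      rcases Nat.eq_zero_or_pos g1 with h10 | h1pos
      · have hg'1 : g' = 1 := by
          have hgg : g' ≤ g := hg'g
          omega
        have hp'0 : p' = 0 := by omega
        rw [hp'0] at hIH
        rw [h10] at hS1' hS2c ⊢
        simp only [Nat.mul_zero, Nat.zero_mul, Nat.add_zero, Nat.zero_add] at hS1' hS2c ⊢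
        linarith
      · -- g1 ≥ 1 : need g1*g1 + p' ≤ 2βg1 − g1 + ... use: g1*g1 + g1 + g' ≤ 2βg1 + 1 (key_ineq2)
        have hg'le : g' ≤ g1 + 1 := by omega
        have hfin := key_ineq2 h1pos hg1β hg'β hg'le
        linarith

lemma dominated_of_not_mem [Nonempty V] :
    ∀ (j : ℕ) (x : V), x ∉ (gstep G)^[j] (Finset.univ : Finset V) →
      ∃ i, i < j ∧ x ∈ NFin G (pick G ((gstep G)^[i] (Finset.univ : Finset V))) := by
  intro j
  induction j with
  | zero => intro x hx; exact absurd (Finset.mem_univ x) hx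
  | succ j ih =>
    intro x hx
    rw [Function.iterate_succ_apply'] at hx
    by_cases hxj : x ∈ (gstep G)^[j] (Finset.univ : Finset V)
    · refine ⟨j, Nat.lt_succ_self j, ?_⟩
      by_contra hnot
      exact hx (Finset.mem_sdiff.2 ⟨hxj, hnot⟩)
    · obtain ⟨i, hi, hmem⟩ := ih x hxj
      exact ⟨i, Nat.lt_succ_of_lt hi, hmem⟩


end TDaux

open TDaux

/-- if `m ≥ C(n-k+c-1, 2) + (n-k)` and `n > k+c-2`, then `γᵗ(G^c) ≤ k`. -/
theorem tropDomNum_le_of_many_edges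
    {V C : Type*} [Fintype V] [Fintype C] (G : SimpleGraph V)
    (col : V → C) (hsurj : Function.Surjective col)
    (n c m k : ℕ) (hn : Fintype.card V = n) (hc : Fintype.card C = c)
    (hm : G.edgeSet.ncard = m) (hk : 1 ≤ k)
    (hedges : (n - k + c - 1).choose 2 + (n - k) ≤ m)
    (hnk : k + c - 2 < n) :
    tropDomNum G col ≤ k := by
  letI : DecidableEq V := Classical.decEq V
  letI : DecidableEq C := Classical.decEq C
  letI : DecidableRel G.Adj := Classical.decRel _
  have key : ∀ S : Finset V, IsDomSet G S → IsTropical col S → S.card ≤ k →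
      tropDomNum G col ≤ k := by
    intro S h1 h2 h3
    exact le_trans (Nat.sInf_le ⟨S, h1, h2, rfl⟩) h3
  have hmcard : G.edgeFinset.card = m := by
    rw [← hm, ← SimpleGraph.coe_edgeFinset, Set.ncard_coe_finset]
  by_cases hle : n ≤ k
  · refine key Finset.univ (fun v => Or.inl (Finset.mem_univ v)) ?_ ?_
    · intro ch
      obtain ⟨v, hv⟩ := hsurj ch
      exact ⟨v, Finset.mem_univ v, hv⟩
    · rw [Finset.card_univ, hn]; exact hle
  -- n ≥ k + 1
  push_neg at hle
  haveI hVne : Nonempty V := by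
    rw [← Fintype.card_pos_iff, hn]; omega
  haveI hCne : Nonempty C := ⟨col (Classical.arbitrary V)⟩
  have hc1 : 1 ≤ c := by rw [← hc]; exact Fintype.card_pos
  by_cases hck : c ≤ k
  case neg =>
    -- c > k : contradiction with edge count
    exfalso
    have hm1 : m ≤ n.choose 2 := by
      rw [← hmcard, ← hn]
      exact SimpleGraph.card_edgeFinset_le_card_choose_two
    have hch : n.choose 2 ≤ (n - k + c - 1).choose 2 :=
      Nat.choose_le_choose 2 (by omega)
    omega
  case pos =>
  -- main case
  set κ := k + 1 - c with hκdef
  have hκ1 : 1 ≤ κ := by omega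
  by_cases hfail : ∀ j, j ≤ κ → κ + 1 ≤ ((gstep G)^[j] (Finset.univ : Finset V)).card + j
  · exfalso
    have hbound := failing_bound G κ hκ1 hfail
    rw [hmcard, hn] at hbound
    set D := n - k + c - 1 with hD
    have hDκ : n - κ = D := by omega
    rw [hDκ] at hbound
    have h2C : 2 * D.choose 2 + D = D * D := two_mul_choose_two D
    have hDsq : D^2 = D * D := sq D
    rw [hDsq] at hbound
    have hd2 : D ≤ 2 * (n - k) := by omega
    -- 2m + 2 ≤ D*D + 1 = 2*choose + D + 1 ≤ 2*choose + 2(n-k) + 1 ≤ 2m + 1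
    have hdouble : 2 * (D.choose 2) + 2 * (n - k) ≤ 2 * m := by omega
    linarith
  · push_neg at hfail
    obtain ⟨j, hjκ, hjlt⟩ := hfail
    have hj1 : 1 ≤ j := by
      rcases Nat.eq_zero_or_pos j with h0 | h0
      · exfalso
        rw [h0] at hjlt
        simp only [Function.iterate_zero_apply, Finset.card_univ, hn] at hjlt
        omega
      · exact h0
    -- construct S
    set v₁ := pick G (Finset.univ : Finset V) with hv₁
    set P : Finset V := (Finset.range j).image
      (fun i => pick G ((gstep G)^[i] (Finset.univ : Finset V))) with hP
    set R : Finset V := Finset.univ.image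
      (fun ch : C => if ch = col v₁ then v₁ else Classical.choose (hsurj ch)) with hR
    set W : Finset V := (gstep G)^[j] (Finset.univ : Finset V) with hW
    have hv₁P : v₁ ∈ P := by
      rw [hP]
      refine Finset.mem_image.2 ⟨0, Finset.mem_range.2 (by omega), ?_⟩
      rw [Function.iterate_zero_apply]
    have hv₁R : v₁ ∈ R := by
      rw [hR]
      refine Finset.mem_image.2 ⟨col v₁, Finset.mem_univ _, ?_⟩
      rw [if_pos rfl]
    refine key (P ∪ R ∪ W) ?_ ?_ ?_
    · -- dominating
      intro w
      by_cases hw : w ∈ W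
      · exact Or.inl (Finset.mem_union_right _ hw)
      · obtain ⟨i, hij, hmem⟩ := dominated_of_not_mem G j w hw
        have hpi : pick G ((gstep G)^[i] (Finset.univ : Finset V)) ∈ P := by
          rw [hP]
          exact Finset.mem_image.2 ⟨i, Finset.mem_range.2 hij, rfl⟩
        rw [NFin, Finset.mem_insert] at hmem
        rcases hmem with heq | hadj
        · exact Or.inl (Finset.mem_union_left _ (Finset.mem_union_left _ (heq ▸ hpi)))
        · exact Or.inr ⟨_, Finset.mem_union_left _ (Finset.mem_union_left _ hpi),
            (SimpleGraph.mem_neighborFinset G _ w).1 hadj⟩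
    · -- tropical
      intro ch
      refine ⟨if ch = col v₁ then v₁ else Classical.choose (hsurj ch), ?_, ?_⟩
      · refine Finset.mem_union_left _ (Finset.mem_union_right _ ?_)
        rw [hR]
        exact Finset.mem_image.2 ⟨ch, Finset.mem_univ _, rfl⟩
      · by_cases hch : ch = col v₁
        · rw [if_pos hch]; exact hch.symm
        · rw [if_neg hch]; exact Classical.choose_spec (hsurj ch)
    · -- cardinality
      have hPcard : P.card ≤ j := by
        rw [hP]
        exact le_trans Finset.card_image_le (by rw [Finset.card_range])
      have hRcard : R.card ≤ c := by
        rw [hR]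
        exact le_trans Finset.card_image_le (by rw [Finset.card_univ, hc])
      have hRe : (R.erase v₁).card = R.card - 1 := Finset.card_erase_of_mem hv₁R
      have hPR : (P ∪ R) ⊆ P ∪ (R.erase v₁) := by
        intro x hx
        rcases Finset.mem_union.1 hx with h | h
        · exact Finset.mem_union_left _ h
        · by_cases hxv : x = v₁
          · exact Finset.mem_union_left _ (hxv ▸ hv₁P)
          · exact Finset.mem_union_right _ (Finset.mem_erase.2 ⟨hxv, h⟩)
      have h1 : (P ∪ R).card ≤ j + (c - 1) := by
        calc (P ∪ R).card ≤ (P ∪ R.erase v₁).card := Finset.card_le_card hPR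
          _ ≤ P.card + (R.erase v₁).card := Finset.card_union_le _ _
          _ ≤ j + (c - 1) := by omega
      have hWcard : W.card ≤ κ - j := by omega
      calc (P ∪ R ∪ W).card ≤ (P ∪ R).card + W.card := Finset.card_union_le _ _
        _ ≤ (j + (c - 1)) + (κ - j) := by omega
        _ ≤ k := by omega
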